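/- Let F be a finite signature, ≿ a precedence on F, and A a simple monotone well-founded ordered F-algebra. Then the weighted path order >_wpo induced by A and ≿ is a reduction order, i.e. a well-founded strict order on terms that is closed under contexts and closed under substitutions. -/

import Mathlib

/-- First-order terms over a signature `F` with arity function `ar` and variables `V`. -/
inductive Term (F : Type) (ar : F → ℕ) (V : Type) : Type where
  | var : V → Term F ar V
  | app : (f : F) → (Fin (ar f) → Term F ar V) → Term F ar V

namespace Term

variable {F V : Type} {ar : F → ℕ}

/-- Application of a substitution `σ : V → Term F ar V` to a term. -/
def subst (σ : V → Term F ar V) : Term F ar V → Term F ar V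
  | var v => σ v
  | app f args => app f (fun i => (args i).subst σ)

/-- Interpretation of a term in an `F`-algebra with carrier `A` under assignment `α`. -/
def eval {A : Type} (I : (f : F) → (Fin (ar f) → A) → A) (α : V → A) :
    Term F ar V → A
  | var v => α v
  | app f args => I f (fun i => (args i).eval I α)

/-- A term is a non-variable term (function application). -/
def IsApp : Term F ar V → Prop
  | var _ => False
  | app _ _ => True

end Term

section Algebra

variable {F V A : Type}

/-- `RC lt a b` : reflexive closure of the strict order `lt`, i.e. `a ≤ b`. -/
def RC (lt : A → A → Prop) (a b : A) : Prop := lt a b ∨ a = b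

variable (ar : F → ℕ) (I : (f : F) → (Fin (ar f) → A) → A) (lt : A → A → Prop)

/-- `s >_A t` : `[α](t) < [α](s)` for every assignment `α`. -/
def GTA (s t : Term F ar V) : Prop := ∀ α : V → A, lt (t.eval I α) (s.eval I α)

/-- `s ≥_A t` : `[α](t) ≤ [α](s)` for every assignment `α`. -/
def GEA (s t : Term F ar V) : Prop := ∀ α : V → A, RC lt (t.eval I α) (s.eval I α)

/-- The algebra is simple: `f_A(a_1, …, a_n) ≥ a_i`. -/
def Simple : Prop := ∀ (f : F) (as : Fin (ar f) → A) (i : Fin (ar f)), RC lt (as i) (I f as)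

/-- The algebra is weakly monotone: `a_i > b` implies
`f_A(a_1,…,a_i,…,a_n) ≥ f_A(a_1,…,b,…,a_n)`. -/
def WeaklyMonotone : Prop :=
  ∀ (f : F) (as : Fin (ar f) → A) (i : Fin (ar f)) (b : A),
    lt b (as i) → RC lt (I f (Function.update as i b)) (I f as)

end Algebra

section WPO

variable {F V A : Type} (ar : F → ℕ) (I : (f : F) → (Fin (ar f) → A) → A)
  (lt : A → A → Prop) (prec : F → F → Prop)

mutual
  /-- The weighted path order induced by the algebra `(A, I, lt)` and the precedence `prec`. -/
  inductive WPO : Term F ar V → Term F ar V → Prop where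
    /-- (1) `s >_A t`. -/
    | alg {s t} : GTA ar I lt s t → WPO s t
    /-- (2a) `s ≥_A t` and `s_i >_wpo t`. -/
    | sub {f ss t} (i : Fin (ar f)) :
        GEA ar I lt (Term.app f ss) t → WPO (ss i) t → WPO (Term.app f ss) t
    /-- (2a) `s ≥_A t` and `s_i = t`. -/
    | subEq {f ss t} (i : Fin (ar f)) :
        GEA ar I lt (Term.app f ss) t → ss i = t → WPO (Term.app f ss) t
    /-- (2b-i) `s ≥_A t`, `s >_wpo t_j` for all `j`, and `f ≻ g`. -/
    | prc {f ss g ts} :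
        GEA ar I lt (Term.app f ss) (Term.app g ts) →
        (∀ j, WPO (Term.app f ss) (ts j)) →
        prec f g → ¬ prec g f → WPO (Term.app f ss) (Term.app g ts)
    /-- (2b-ii) `s ≥_A t`, `s >_wpo t_j` for all `j`, `f ≿ g` and lex comparison of arguments. -/
    | lex {f ss g ts} :
        GEA ar I lt (Term.app f ss) (Term.app g ts) →
        (∀ j, WPO (Term.app f ss) (ts j)) →
        prec f g → WPOLex (List.ofFn ss) (List.ofFn ts) →
        WPO (Term.app f ss) (Term.app g ts)

  /-- Lexicographic extension of `WPO` to argument lists (of possibly different lengths). -/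
  inductive WPOLex : List (Term F ar V) → List (Term F ar V) → Prop where
    | head {s t l₁ l₂} : WPO s t → WPOLex (s :: l₁) (t :: l₂)
    | tail {s l₁ l₂} : WPOLex l₁ l₂ → WPOLex (s :: l₁) (s :: l₂)
    | longer {s l₁} : WPOLex (s :: l₁) []
end

end WPO

section SPO

variable {F V : Type} {ar : F → ℕ} (qge qgt : Term F ar V → Term F ar V → Prop)

mutual
  /-- The semantic path order induced by the order pair `(qge, qgt)` (`⊒∼`, `⊐`). -/
  inductive SPO : Term F ar V → Term F ar V → Prop where
    /-- (1) `s_i >_spo t`. -/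
    | sub {f ss t} (i : Fin (ar f)) : SPO (ss i) t → SPO (Term.app f ss) t
    /-- (1) `s_i = t`. -/
    | subEq {f ss t} (i : Fin (ar f)) : ss i = t → SPO (Term.app f ss) t
    /-- (2a) `s >_spo t_j` for all `j` and `s ⊐ t`. -/
    | gt {f ss g ts} : (∀ j, SPO (Term.app f ss) (ts j)) →
        qgt (Term.app f ss) (Term.app g ts) → SPO (Term.app f ss) (Term.app g ts)
    /-- (2b) `s >_spo t_j` for all `j`, `s ⊒∼ t` and lex comparison of arguments. -/
    | lex {f ss g ts} : (∀ j, SPO (Term.app f ss) (ts j)) →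
        qge (Term.app f ss) (Term.app g ts) →
        SPOLex (List.ofFn ss) (List.ofFn ts) → SPO (Term.app f ss) (Term.app g ts)

  /-- Lexicographic extension of `SPO` to argument lists. -/
  inductive SPOLex : List (Term F ar V) → List (Term F ar V) → Prop where
    | head {s t l₁ l₂} : SPO s t → SPOLex (s :: l₁) (t :: l₂)
    | tail {s l₁ l₂} : SPOLex l₁ l₂ → SPOLex (s :: l₁) (s :: l₂)
    | longer {s l₁} : SPOLex (s :: l₁) []
end

end SPO

section Props

variable {F V : Type} {ar : F → ℕ}

/-- Closure under contexts: replacing one argument. -/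
def ClosedCtx (R : Term F ar V → Term F ar V → Prop) : Prop :=
  ∀ (f : F) (args : Fin (ar f) → Term F ar V) (i : Fin (ar f)) (s t : Term F ar V),
    R s t → R (Term.app f (Function.update args i s)) (Term.app f (Function.update args i t))

/-- Closure under substitutions. -/
def ClosedSubst (R : Term F ar V → Term F ar V → Prop) : Prop :=
  ∀ (σ : V → Term F ar V) (s t : Term F ar V), R s t → R (s.subst σ) (t.subst σ)

/-- A reduction order: a well-founded strict order closed under contexts and substitutions. -/
def ReductionOrder (R : Term F ar V → Term F ar V → Prop) : Prop :=
  (∀ s, ¬ R s s) ∧ Transitive R ∧ WellFounded (fun s t => R t s) ∧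
    ClosedCtx R ∧ ClosedSubst R

/-- `Subterm t s` : `t` is a subterm of `s`. -/
inductive Subterm : Term F ar V → Term F ar V → Prop where
  | refl {t} : Subterm t t
  | arg {t f ss} (i : Fin (ar f)) : Subterm t (ss i) → Subterm t (Term.app f ss)

/-- `ProperSubterm t s` : `t` is a proper subterm of `s`. -/
def ProperSubterm (t s : Term F ar V) : Prop :=
  ∃ (f : F) (ss : Fin (ar f) → Term F ar V) (i : Fin (ar f)),
    s = Term.app f ss ∧ Subterm t (ss i)

/-- The rewrite relation of a TRS `R`: closure of the rules under substitutions and contexts. -/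
inductive Rewrite (R : Set (Term F ar V × Term F ar V)) : Term F ar V → Term F ar V → Prop where
  | rule {l r} (σ : V → Term F ar V) : (l, r) ∈ R → Rewrite R (l.subst σ) (r.subst σ)
  | ctx {s t} (f : F) (args : Fin (ar f) → Term F ar V) (i : Fin (ar f)) :
      Rewrite R s t →
      Rewrite R (Term.app f (Function.update args i s)) (Term.app f (Function.update args i t))

end Props

section Pair

variable {F V A : Type} (ar : F → ℕ) (I : (f : F) → (Fin (ar f) → A) → A)
  (lt : A → A → Prop) (prec : F → F → Prop)

/-- `s ⊒∼ t` : both non-variable, and `s >_A t`, or `s ≥_A t` and `root(s) ≿ root(t)`. -/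
def QGE (s t : Term F ar V) : Prop :=
  ∃ (f : F) (ss : Fin (ar f) → Term F ar V) (g : F) (ts : Fin (ar g) → Term F ar V),
    s = Term.app f ss ∧ t = Term.app g ts ∧
      (GTA ar I lt s t ∨ (GEA ar I lt s t ∧ prec f g))

/-- `s ⊐ t` : both non-variable, and `s >_A t`, or `s ≥_A t` and `root(s) ≻ root(t)`. -/
def QGT (s t : Term F ar V) : Prop :=
  ∃ (f : F) (ss : Fin (ar f) → Term F ar V) (g : F) (ts : Fin (ar g) → Term F ar V),
    s = Term.app f ss ∧ t = Term.app g ts ∧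
      (GTA ar I lt s t ∨ (GEA ar I lt s t ∧ prec f g ∧ ¬ prec g f))

variable (Im : (f : F) → (Fin (ar f) → A) → A)

/-- Interpretation of the marked term `t♯` (root symbol interpreted by `Im`). -/
def evalSharp (α : V → A) : Term F ar V → A
  | .var v => α v
  | .app f ts => Im f (fun i => (ts i).eval I α)

/-- `s♯ >_A t♯`. -/
def GTAS (s t : Term F ar V) : Prop :=
  ∀ α : V → A, lt (evalSharp ar I Im α t) (evalSharp ar I Im α s)

/-- `s♯ ≥_A t♯`. -/
def GEAS (s t : Term F ar V) : Prop :=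
  ∀ α : V → A, RC lt (evalSharp ar I Im α t) (evalSharp ar I Im α s)

/-- Marked version of `⊒∼` : `s♯ >_A t♯`, or `s♯ ≥_A t♯` and `root(s) ≿ root(t)`. -/
def QGES (s t : Term F ar V) : Prop :=
  ∃ (f : F) (ss : Fin (ar f) → Term F ar V) (g : F) (ts : Fin (ar g) → Term F ar V),
    s = Term.app f ss ∧ t = Term.app g ts ∧
      (GTAS ar I lt Im s t ∨ (GEAS ar I lt Im s t ∧ prec f g))

/-- Marked version of `⊐` : `s♯ >_A t♯`, or `s♯ ≥_A t♯` and `root(s) ≻ root(t)`. -/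
def QGTS (s t : Term F ar V) : Prop :=
  ∃ (f : F) (ss : Fin (ar f) → Term F ar V) (g : F) (ts : Fin (ar g) → Term F ar V),
    s = Term.app f ss ∧ t = Term.app g ts ∧
      (GTAS ar I lt Im s t ∨ (GEAS ar I lt Im s t ∧ prec f g ∧ ¬ prec g f))

/-- The generalized weighted path order: `s ≥_A t` and `s >_spo t` for the SPO induced
from the marked order pair. -/
def GWPO (s t : Term F ar V) : Prop :=
  GEA ar I lt s t ∧ SPO (QGES ar I lt prec Im) (QGTS ar I lt prec Im) s t

end Pair


namespace Term
variable {F V : Type} {ar : F → ℕ}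

def size : Term F ar V → ℕ
  | var _ => 1
  | app _ args => 1 + ∑ i, size (args i)

lemma size_pos (t : Term F ar V) : 1 ≤ size t := by
  cases t <;> simp [size]

lemma size_lt {f : F} (ss : Fin (ar f) → Term F ar V) (i : Fin (ar f)) :
    size (ss i) < size (Term.app f ss) := by
  simp only [size]
  have h2 : size (ss i) ≤ ∑ j, size (ss j) :=
    Finset.single_le_sum (f := fun j => size (ss j)) (fun _ _ => Nat.zero_le _)
      (Finset.mem_univ i)
  omega

lemma size_lt_of_mem {f : F} {ss : Fin (ar f) → Term F ar V} {x : Term F ar V}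
    (hx : x ∈ List.ofFn ss) : size x < size (Term.app f ss) := by
  rcases (List.mem_ofFn).mp hx with ⟨i, rfl⟩
  exact size_lt ss i

lemma eval_subst {A : Type} (I : (f : F) → (Fin (ar f) → A) → A) (α : V → A)
    (σ : V → Term F ar V) (t : Term F ar V) :
    (t.subst σ).eval I α = t.eval I (fun v => (σ v).eval I α) := by
  induction t with
  | var v => rfl
  | app f args ih => simp only [subst, eval]; congr 1; funext i; exact ih i

end Term

section AuxLemmas

variable {F V A : Type} {ar : F → ℕ} {I : (f : F) → (Fin (ar f) → A) → A}
  {lt : A → A → Prop} {prec : F → F → Prop}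

lemma RC_trans (ltt : Transitive lt) {a b c : A} : RC lt a b → RC lt b c → RC lt a c := by
  rintro (h1 | rfl) (h2 | rfl)
  · exact Or.inl (ltt h1 h2)
  · exact Or.inl h1
  · exact Or.inl h2
  · exact Or.inr rfl

lemma lt_RC (ltt : Transitive lt) {a b c : A} : lt a b → RC lt b c → lt a c := by
  rintro h1 (h2 | rfl)
  · exact ltt h1 h2
  · exact h1

lemma RC_lt (ltt : Transitive lt) {a b c : A} : RC lt a b → lt b c → lt a c := by
  rintro (h1 | rfl) h2
  · exact ltt h1 h2
  · exact h2

lemma wpo_gea {s t : Term F ar V} (h : WPO ar I lt prec s t) : GEA ar I lt s t := by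
  cases h with
  | alg h => exact fun α => Or.inl (h α)
  | sub i hge _ => exact hge
  | subEq i hge _ => exact hge
  | prc hge _ _ _ => exact hge
  | lex hge _ _ _ => exact hge

lemma gea_trans (ltt : Transitive lt) {s t u : Term F ar V}
    (h1 : GEA ar I lt s t) (h2 : GEA ar I lt t u) : GEA ar I lt s u :=
  fun α => RC_trans ltt (h2 α) (h1 α)

lemma wpoLex_trans_of (ltt : Transitive lt) :
    ∀ (l₁ l₂ l₃ : List (Term F ar V)),
      (∀ x ∈ l₁, ∀ y ∈ l₂, ∀ z ∈ l₃, WPO ar I lt prec x y → WPO ar I lt prec y z →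
        WPO ar I lt prec x z) →
      WPOLex ar I lt prec l₁ l₂ → WPOLex ar I lt prec l₂ l₃ →
      WPOLex ar I lt prec l₁ l₃ := by
  intro l₁
  induction l₁ with
  | nil => intro l₂ l₃ H h1 h2; cases h1
  | cons s l₁ ih =>
    intro l₂ l₃ H h1 h2
    cases h1 with
    | head hst =>
      cases h2 with
      | head htu =>
        exact .head (H s (List.mem_cons_self) _ (List.mem_cons_self) _
          (List.mem_cons_self) hst htu)
      | tail h2' => exact .head hst
      | longer => exact .longer
    | tail h1' =>
      cases h2 with
      | head hsu => exact .head hsu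
      | tail h2' =>
        refine .tail (ih _ _ ?_ h1' h2')
        intro x hx y hy z hz
        exact H x (List.mem_cons_of_mem _ hx) y (List.mem_cons_of_mem _ hy) z
          (List.mem_cons_of_mem _ hz)
      | longer => exact .longer
    | longer => cases h2

lemma wpo_trans_aux (ltt : Transitive lt)
    (prec_trans : ∀ f g h : F, prec f g → prec g h → prec f h) :
    ∀ n (s t u : Term F ar V), s.size + t.size + u.size ≤ n →
      WPO ar I lt prec s t → WPO ar I lt prec t u → WPO ar I lt prec s u := by
  intro n
  induction n with
  | zero =>
    intro s t u hn
    have := s.size_pos; have := t.size_pos; have := u.size_pos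
    omega
  | succ n ih =>
    intro s t u hn h1 h2
    cases h1 with
    | alg hst =>
      exact .alg (fun α => RC_lt ltt (wpo_gea h2 α) (hst α))
    | @sub f ss t i hge hw =>
      refine .sub i (gea_trans ltt hge (wpo_gea h2)) (ih _ _ _ ?_ hw h2)
      have := Term.size_lt ss i
      omega
    | subEq i hge heq =>
      refine .sub i (gea_trans ltt hge (wpo_gea h2)) (heq ▸ h2)
    | @prc f ss g ts hge hall hfg hngf =>
      cases h2 with
      | alg htu => exact .alg (fun α => lt_RC ltt (htu α) (hge α))
      | @sub _ _ _ j hge2 hw2 =>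
        refine ih _ _ _ ?_ (hall j) hw2
        have := Term.size_lt ts j
        omega
      | subEq j hge2 heq2 => exact heq2 ▸ hall j
      | @prc _ _ h us hge2 hall2 hgh hnhg =>
        refine .prc (gea_trans ltt hge hge2) (fun k => ih _ _ _ ?_
          (.prc hge hall hfg hngf) (hall2 k)) (prec_trans _ _ _ hfg hgh)
          (fun hc => hnhg (prec_trans _ _ _ hc hfg))
        have := Term.size_lt us k
        omega
      | @lex _ _ h us hge2 hall2 hgh hlex2 =>
        refine .prc (gea_trans ltt hge hge2) (fun k => ih _ _ _ ?_
          (.prc hge hall hfg hngf) (hall2 k)) (prec_trans _ _ _ hfg hgh)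
          (fun hc => hngf (prec_trans _ _ _ hgh hc))
        have := Term.size_lt us k
        omega
    | @lex f ss g ts hge hall hfg hlex =>
      cases h2 with
      | alg htu => exact .alg (fun α => lt_RC ltt (htu α) (hge α))
      | @sub _ _ _ j hge2 hw2 =>
        refine ih _ _ _ ?_ (hall j) hw2
        have := Term.size_lt ts j
        omega
      | subEq j hge2 heq2 => exact heq2 ▸ hall j
      | @prc _ _ h us hge2 hall2 hgh hnhg =>
        refine .prc (gea_trans ltt hge hge2) (fun k => ih _ _ _ ?_
          (.lex hge hall hfg hlex) (hall2 k)) (prec_trans _ _ _ hfg hgh)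
          (fun hc => hnhg (prec_trans _ _ _ hc hfg))
        have := Term.size_lt us k
        omega
      | @lex _ _ h us hge2 hall2 hgh hlex2 =>
        refine .lex (gea_trans ltt hge hge2) (fun k => ih _ _ _ ?_
          (.lex hge hall hfg hlex) (hall2 k)) (prec_trans _ _ _ hfg hgh)
          (wpoLex_trans_of ltt _ _ _ ?_ hlex hlex2)
        · have := Term.size_lt us k
          omega
        · intro x hx y hy z hz hxy hyz
          refine ih _ _ _ ?_ hxy hyz
          have := Term.size_lt_of_mem hx
          have := Term.size_lt_of_mem hy
          have := Term.size_lt_of_mem hz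
          omega


lemma gta_subst {s t : Term F ar V} (σ : V → Term F ar V) (h : GTA ar I lt s t) :
    GTA ar I lt (s.subst σ) (t.subst σ) := by
  intro α
  rw [Term.eval_subst, Term.eval_subst]
  exact h _

lemma gea_subst {s t : Term F ar V} (σ : V → Term F ar V) (h : GEA ar I lt s t) :
    GEA ar I lt (s.subst σ) (t.subst σ) := by
  intro α
  rw [Term.eval_subst, Term.eval_subst]
  exact h _

lemma wpoLex_map (m : Term F ar V → Term F ar V) :
    ∀ (l₁ l₂ : List (Term F ar V)),
      (∀ x ∈ l₁, ∀ y ∈ l₂, WPO ar I lt prec x y → WPO ar I lt prec (m x) (m y)) →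
      WPOLex ar I lt prec l₁ l₂ → WPOLex ar I lt prec (l₁.map m) (l₂.map m) := by
  intro l₁
  induction l₁ with
  | nil => intro l₂ H h; cases h
  | cons s l₁ ih =>
    intro l₂ H h
    cases h with
    | head hst =>
      exact .head (H _ (List.mem_cons_self) _ (List.mem_cons_self) hst)
    | tail h' =>
      refine .tail (ih _ ?_ h')
      intro x hx y hy
      exact H x (List.mem_cons_of_mem _ hx) y (List.mem_cons_of_mem _ hy)
    | longer => exact .longer

lemma wpo_subst_aux (σ : V → Term F ar V) :
    ∀ n (s t : Term F ar V), s.size + t.size ≤ n →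
      WPO ar I lt prec s t → WPO ar I lt prec (s.subst σ) (t.subst σ) := by
  intro n
  induction n with
  | zero =>
    intro s t hn
    have := s.size_pos; have := t.size_pos
    omega
  | succ n ih =>
    intro s t hn h
    cases h with
    | alg h => exact .alg (gta_subst σ h)
    | @sub f ss t i hge hw =>
      refine .sub i (gea_subst σ hge) (ih _ _ ?_ hw)
      have := Term.size_lt ss i
      simp only [Term.size] at *
      omega
    | @subEq f ss t i hge heq =>
      exact .subEq i (gea_subst σ hge) (congrArg (Term.subst σ) heq)
    | @prc f ss g ts hge hall hfg hngf =>
      refine .prc (gea_subst σ hge) (fun j => ih _ _ ?_ (hall j)) hfg hngf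
      have := Term.size_lt ts j
      omega
    | @lex f ss g ts hge hall hfg hlex =>
      refine .lex (gea_subst σ hge) (fun j => ih _ _ ?_ (hall j)) hfg ?_
      · have := Term.size_lt ts j
        omega
      · have hmap := wpoLex_map (Term.subst σ) (List.ofFn ss) (List.ofFn ts) ?_ hlex
        · simpa [List.map_ofFn, Function.comp_def] using hmap
        · intro x hx y hy hxy
          refine ih _ _ ?_ hxy
          have := Term.size_lt_of_mem hx
          have := Term.size_lt_of_mem hy
          omega

lemma wpo_closedSubst : ClosedSubst (WPO (V := V) ar I lt prec) :=
  fun σ s t h => wpo_subst_aux σ (s.size + t.size) s t (le_refl _) h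

lemma eval_app_update {f : F} (args : Fin (ar f) → Term F ar V) (i : Fin (ar f))
    (s : Term F ar V) (α : V → A) :
    (Term.app f (Function.update args i s)).eval I α =
      I f (Function.update (fun j => (args j).eval I α) i (s.eval I α)) := by
  simp only [Term.eval]
  congr 1
  funext j
  by_cases hj : j = i
  · subst hj; simp
  · simp [Function.update_apply, hj]

lemma gea_ctx (hmono : WeaklyMonotone ar I lt) {s t : Term F ar V}
    (h : GEA ar I lt s t) (f : F) (args : Fin (ar f) → Term F ar V) (i : Fin (ar f)) :
    GEA ar I lt (Term.app f (Function.update args i s))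
      (Term.app f (Function.update args i t)) := by
  intro α
  rw [eval_app_update, eval_app_update]
  rcases h α with hlt | heq
  · have := hmono f (Function.update (fun j => (args j).eval I α) i (s.eval I α)) i
      (t.eval I α) (by rw [Function.update_self]; exact hlt)
    simpa [Function.update_idem] using this
  · rw [heq]
    exact Or.inr rfl

lemma gea_arg (hsimple : Simple ar I lt) {f : F} (ss : Fin (ar f) → Term F ar V)
    (i : Fin (ar f)) : GEA ar I lt (Term.app f ss) (ss i) :=
  fun α => hsimple f (fun j => (ss j).eval I α) i

lemma wpoLex_pointwise :
    ∀ {n : ℕ} (g₁ g₂ : Fin n → Term F ar V) (i : Fin n),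
      (∀ j, j < i → g₁ j = g₂ j) → WPO ar I lt prec (g₁ i) (g₂ i) →
      WPOLex ar I lt prec (List.ofFn g₁) (List.ofFn g₂) := by
  intro n
  induction n with
  | zero => intro g₁ g₂ i; exact absurd i.2 (by omega)
  | succ n ih =>
    intro g₁ g₂ i heq hw
    rw [List.ofFn_succ, List.ofFn_succ]
    cases i using Fin.cases with
    | zero => exact .head hw
    | succ j =>
      have h0 : g₁ 0 = g₂ 0 := heq 0 (Fin.succ_pos j)
      rw [h0]
      refine .tail (ih _ _ j ?_ hw)
      intro k hk
      exact heq k.succ (Fin.succ_lt_succ_iff.mpr hk)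

lemma wpo_closedCtx (ltt : Transitive lt) (hsimple : Simple ar I lt)
    (hmono : WeaklyMonotone ar I lt) (prec_refl : ∀ f, prec f f) :
    ClosedCtx (WPO (V := V) ar I lt prec) := by
  intro f args i s t h
  have hge : GEA ar I lt (Term.app f (Function.update args i s))
      (Term.app f (Function.update args i t)) := gea_ctx hmono (wpo_gea h) f args i
  refine .lex hge ?_ (prec_refl f) ?_
  · intro j
    by_cases hj : j = i
    · subst hj
      refine .sub j (gea_trans ltt (gea_arg hsimple _ j) ?_) ?_
      · simpa using wpo_gea h
      · simpa using h
    · refine .subEq j ?_ (by simp [Function.update_of_ne hj])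
      have := gea_arg hsimple (Function.update args i s) j
      simpa [Function.update_of_ne hj] using this
  · refine wpoLex_pointwise _ _ i (fun j hj => ?_) (by simpa using h)
    rw [Function.update_of_ne (ne_of_lt hj), Function.update_of_ne (ne_of_lt hj)]


lemma lexAcc (n : ℕ) :
    ∀ l : List (Term F ar V), (∀ x ∈ l, Acc (fun x y => WPO ar I lt prec y x) x) →
      Acc (fun l' l : List (Term F ar V) => WPOLex ar I lt prec l l' ∧ l'.length ≤ n ∧
        ∀ x ∈ l', Acc (fun x y => WPO ar I lt prec y x) x) l := by
  have accNil : ∀ m, Acc (fun l' l : List (Term F ar V) =>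
      WPOLex ar I lt prec l l' ∧ l'.length ≤ m ∧
        ∀ x ∈ l', Acc (fun x y => WPO ar I lt prec y x) x) [] := by
    intro m
    constructor
    rintro l'' ⟨h2, -, -⟩
    cases h2
  induction n with
  | zero =>
    intro l _
    constructor
    rintro l' ⟨h, hlen, hacc⟩
    have : l' = [] := List.length_eq_zero_iff.mp (Nat.le_zero.mp hlen)
    subst this
    exact accNil 0
  | succ n ihn =>
    have inner : ∀ s : Term F ar V, Acc (fun x y => WPO ar I lt prec y x) s →
        ∀ l₂ : List (Term F ar V),
          Acc (fun l' l : List (Term F ar V) => WPOLex ar I lt prec l l' ∧ l'.length ≤ n ∧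
            ∀ x ∈ l', Acc (fun x y => WPO ar I lt prec y x) x) l₂ →
          (∀ x ∈ l₂, Acc (fun x y => WPO ar I lt prec y x) x) →
          Acc (fun l' l : List (Term F ar V) => WPOLex ar I lt prec l l' ∧
            l'.length ≤ n + 1 ∧
            ∀ x ∈ l', Acc (fun x y => WPO ar I lt prec y x) x) (s :: l₂) := by
      intro s hs
      induction hs with
      | intro s hs ihs =>
        intro l₂ hl₂
        induction hl₂ with
        | intro l₂ hl₂ ihl₂ =>
          intro hmem
          constructor
          rintro l' ⟨hlex, hlen, hacc⟩
          cases hlex with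
          | @head _ t _ l₂'' h =>
            refine ihs t h l₂'' (ihn l₂'' ?_) ?_
            · intro x hx; exact hacc x (List.mem_cons_of_mem _ hx)
            · intro x hx; exact hacc x (List.mem_cons_of_mem _ hx)
          | @tail _ _ l₂'' h =>
            refine ihl₂ l₂'' ⟨h, ?_, ?_⟩ ?_
            · simpa using Nat.le_of_succ_le_succ (by simpa using hlen)
            · intro x hx; exact hacc x (List.mem_cons_of_mem _ hx)
            · intro x hx; exact hacc x (List.mem_cons_of_mem _ hx)
          | longer => exact accNil (n + 1)
    intro l hmem
    cases l with
    | nil => exact accNil (n + 1)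
    | cons s l₂ =>
      exact inner s (hmem s (List.mem_cons_self)) l₂
        (ihn l₂ (fun x hx => hmem x (List.mem_cons_of_mem _ hx)))
        (fun x hx => hmem x (List.mem_cons_of_mem _ hx))

lemma wpo_wf [Fintype F] [Nonempty A]
    (lt_trans : Transitive lt) (lt_wf : WellFounded lt)
    (hsimple : Simple ar I lt)
    (prec_refl : ∀ f, prec f f)
    (prec_trans : ∀ f g h : F, prec f g → prec g h → prec f h) :
    WellFounded (fun s t : Term F ar V => WPO ar I lt prec t s) := by
  classical
  set W : Term F ar V → Term F ar V → Prop := fun s t => WPO ar I lt prec t s with hW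
  have α₀ : V → A := fun _ => Classical.arbitrary A
  -- well-foundedness of the strict precedence
  set precS : F → F → Prop := fun g f => prec f g ∧ ¬ prec g f with hprecS
  have wfP : WellFounded precS := by
    have : IsTrans F precS := ⟨by
      rintro h g f ⟨h1, h2⟩ ⟨h3, h4⟩
      exact ⟨prec_trans _ _ _ h3 h1, fun hc => h4 (prec_trans _ _ _ h1 hc)⟩⟩
    have : IsIrrefl F precS := ⟨by rintro f ⟨h1, h2⟩; exact h2 h1⟩
    exact Finite.wellFounded_of_trans_of_irrefl precS
  set N : ℕ := Finset.univ.sup ar with hN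
  have arN : ∀ f : F, ar f ≤ N := fun f => Finset.le_sup (Finset.mem_univ f)
  set RN : List (Term F ar V) → List (Term F ar V) → Prop :=
    fun l' l => WPOLex ar I lt prec l l' ∧ l'.length ≤ N ∧ ∀ x ∈ l', Acc W x with hRN
  have main : ∀ a : A, ∀ t : Term F ar V, t.eval I α₀ = a → Acc W t := by
    intro a
    induction a using WellFounded.induction lt_wf with
    | _ a IH1 =>
    have IH1' : ∀ t : Term F ar V, lt (t.eval I α₀) a → Acc W t :=
      fun t h => IH1 _ h t rfl
    have big : ∀ f : F, ∀ (g : F) (ss : Fin (ar g) → Term F ar V), prec f g → prec g f →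
        (∀ i, Acc W (ss i)) → (Term.app g ss).eval I α₀ = a → Acc W (Term.app g ss) := by
      intro f
      induction f using WellFounded.induction wfP with
      | _ f IHf =>
      have inner : ∀ l : List (Term F ar V), Acc RN l →
          ∀ (g : F) (ss : Fin (ar g) → Term F ar V), List.ofFn ss = l →
            prec f g → prec g f → (∀ i, Acc W (ss i)) →
            (Term.app g ss).eval I α₀ = a → Acc W (Term.app g ss) := by
        intro l hl
        induction hl with
        | intro l hl ihl =>
          intro g ss hofn hfg hgf hargs hmu
          constructor
          intro t ht
          have ht' : WPO ar I lt prec (Term.app g ss) t := ht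
          clear ht
          induction t with
          | var v =>
            cases ht' with
            | alg h => exact IH1' _ (hmu ▸ h α₀)
            | sub i hge hw => exact (hargs i).inv hw
            | subEq i hge heq => exact heq ▸ hargs i
          | app h ts iht =>
            cases ht' with
            | alg hgt => exact IH1' _ (hmu ▸ hgt α₀)
            | sub i hge hw => exact (hargs i).inv hw
            | subEq i hge heq => exact heq ▸ hargs i
            | prc hge hall hgh hnhg =>
              have hts : ∀ j, Acc W (ts j) := fun j => iht j (hall j)
              rcases hge α₀ with hlt | heq
              · exact IH1' _ (hmu ▸ hlt)
              · exact IHf h ⟨prec_trans _ _ _ hfg hgh,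
                  fun hc => hnhg (prec_trans _ _ _ hc hfg)⟩ h ts (prec_refl h)
                  (prec_refl h) hts (heq.trans hmu)
            | lex hge hall hgh hlex =>
              have hts : ∀ j, Acc W (ts j) := fun j => iht j (hall j)
              rcases hge α₀ with hlt | heq
              · exact IH1' _ (hmu ▸ hlt)
              · by_cases hhf : prec h f
                · refine ihl (List.ofFn ts) ⟨hofn ▸ hlex, ?_, ?_⟩ h ts rfl
                    (prec_trans _ _ _ hfg hgh) hhf hts (heq.trans hmu)
                  · simpa using arN h
                  · intro x hx
                    rcases (List.mem_ofFn).mp hx with ⟨j, rfl⟩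
                    exact hts j
                · exact IHf h ⟨prec_trans _ _ _ hfg hgh, hhf⟩ h ts (prec_refl h)
                    (prec_refl h) hts (heq.trans hmu)
      intro g ss hfg hgf hargs hmu
      refine inner (List.ofFn ss) (lexAcc N (List.ofFn ss) ?_) g ss rfl hfg hgf hargs hmu
      intro x hx
      rcases (List.mem_ofFn).mp hx with ⟨j, rfl⟩
      exact hargs j
    intro s
    induction s with
    | var v =>
      intro hs
      constructor
      intro t ht
      cases ht with
      | alg h => exact IH1' t (hs ▸ h α₀)
    | app f ss ihs =>
      intro hs
      have hargs : ∀ i, Acc W (ss i) := by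
        intro i
        rcases hsimple f (fun j => (ss j).eval I α₀) i with hlt | heq
        · exact IH1' _ (hs ▸ hlt)
        · exact ihs i (heq.trans hs)
      exact big f f ss (prec_refl f) (prec_refl f) hargs hs
  exact ⟨fun t => main (t.eval I α₀) t rfl⟩

end AuxLemmas


/-- For a finite signature `F`, a precedence `prec` (a quasi-order on `F`),
and a simple monotone well-founded ordered `F`-algebra `(A, I, lt)`, the induced weighted
path order is a reduction order. -/
theorem wpo_is_reduction_order
    {F V A : Type} [Fintype F] [Countable V] [Infinite V] [Nonempty A]
    (ar : F → ℕ) (I : (f : F) → (Fin (ar f) → A) → A) (lt : A → A → Prop)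
    (lt_irrefl : ∀ a, ¬ lt a a) (lt_trans : Transitive lt)
    (lt_wf : WellFounded lt)
    (hsimple : Simple ar I lt) (hmono : WeaklyMonotone ar I lt)
    (prec : F → F → Prop) (prec_refl : ∀ f, prec f f)
    (prec_trans : ∀ f g h, prec f g → prec g h → prec f h) :
    ReductionOrder (WPO (V := V) ar I lt prec) := by
  have wf : WellFounded (fun s t : Term F ar V => WPO ar I lt prec t s) :=
    wpo_wf lt_trans lt_wf hsimple prec_refl prec_trans
  refine ⟨?_, ?_, wf, ?_, ?_⟩
  · intro s hss
    exact (WellFounded.isIrrefl wf).irrefl s hss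
  · intro s t u h1 h2
    exact wpo_trans_aux lt_trans prec_trans _ s t u (le_refl _) h1 h2
  · exact wpo_closedCtx lt_trans hsimple hmono prec_refl
  · exact wpo_closedSubst
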